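/- Let D be the derivation of ℚ[x,y,z] with D(x)=xyz, D(y)=yz², D(z)=y²z. For every n ≥ 1, D^n(x) = x · Σ_{σ ∈ Q_n} y^{fap(σ)} z^{2n − fap(σ)}, an identity in ℚ[x,y,z]. -/

import Mathlib

open Finset MvPolynomial

/-- Stirling permutations of order `n`, encoded as functions `Fin (2*n) → Fin (n+1)`
in one-line notation (position `i` holds the letter `σ (i) ∈ {1,…,n}`), such that each
letter `1,…,n` occurs exactly twice and all entries between the two occurrences of a
letter are larger than that letter. -/
def StirlingSet (n : ℕ) : Finset (Fin (2*n) → Fin (n+1)) :=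
  Finset.univ.filter (fun σ =>
    (∀ v : Fin (n+1), (v : ℕ) ≠ 0 →
        (Finset.univ.filter (fun i => σ i = v)).card = 2) ∧
    (∀ i j k : Fin (2*n), i < j → j < k → σ i = σ k → σ i < σ j))

/-- The letter at position `i ∈ {1,…,2n}` of a Stirling permutation, with the
convention that positions outside this range (in particular position `0`) hold `0`. -/
def sval {n : ℕ} (σ : Fin (2*n) → Fin (n+1)) (i : ℕ) : ℕ :=
  if h : 1 ≤ i ∧ i ≤ 2*n then (σ ⟨i - 1, by omega⟩ : ℕ) else 0

/-- The number of ascent-plateaus: indices `2 ≤ i ≤ 2n-1` with `σ_{i-1} < σ_i = σ_{i+1}`. -/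
def apQ {n : ℕ} (σ : Fin (2*n) → Fin (n+1)) : ℕ :=
  ((Finset.Icc 2 (2*n - 1)).filter
    (fun i => sval σ (i-1) < sval σ i ∧ sval σ i = sval σ (i+1))).card

/-- The number of left ascent-plateaus: indices `1 ≤ i ≤ 2n-1` with
`σ_{i-1} < σ_i = σ_{i+1}`, where `σ_0 = 0`. -/
def lapQ {n : ℕ} (σ : Fin (2*n) → Fin (n+1)) : ℕ :=
  ((Finset.Icc 1 (2*n - 1)).filter
    (fun i => sval σ (i-1) < sval σ i ∧ sval σ i = sval σ (i+1))).card

/-- The number of double ascents: indices `1 ≤ i ≤ 2n-1` with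
`σ_{i-1} < σ_i < σ_{i+1}`, where `σ_0 = 0`. -/
def dascQ {n : ℕ} (σ : Fin (2*n) → Fin (n+1)) : ℕ :=
  ((Finset.Icc 1 (2*n - 1)).filter
    (fun i => sval σ (i-1) < sval σ i ∧ sval σ i < sval σ (i+1))).card

/-- The number of descent-plateaus: indices `2 ≤ i ≤ 2n-1` with
`σ_{i-1} > σ_i = σ_{i+1}`. -/
def dpQ {n : ℕ} (σ : Fin (2*n) → Fin (n+1)) : ℕ :=
  ((Finset.Icc 2 (2*n - 1)).filter
    (fun i => sval σ i < sval σ (i-1) ∧ sval σ i = sval σ (i+1))).card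

/-- The number of ascents: indices `1 ≤ i ≤ 2n-1` with `σ_i < σ_{i+1}` or `i = 1`. -/
def ascQ {n : ℕ} (σ : Fin (2*n) → Fin (n+1)) : ℕ :=
  ((Finset.Icc 1 (2*n - 1)).filter
    (fun i => sval σ i < sval σ (i+1) ∨ i = 1)).card

/-- The number of plateaus: indices `1 ≤ i ≤ 2n-1` with `σ_i = σ_{i+1}`. -/
def platQ {n : ℕ} (σ : Fin (2*n) → Fin (n+1)) : ℕ :=
  ((Finset.Icc 1 (2*n - 1)).filter (fun i => sval σ i = sval σ (i+1))).card

/-- The flag ascent-plateau number: `2·ap(σ)+1` if `σ_1 = σ_2`, and `2·ap(σ)` otherwise. -/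
def fapQ {n : ℕ} (σ : Fin (2*n) → Fin (n+1)) : ℕ :=
  if 1 ≤ n ∧ sval σ 1 = sval σ 2 then 2 * apQ σ + 1 else 2 * apQ σ


section Basics
variable {n : ℕ}

lemma sval_le (σ : Fin (2*n) → Fin (n+1)) (k : ℕ) : sval σ k ≤ n := by
  unfold sval; split
  · exact Nat.lt_succ_iff.mp (Fin.is_lt _)
  · omega

lemma sval_eq_zero_of_gt (σ : Fin (2*n) → Fin (n+1)) {k : ℕ} (h : 2*n < k) : sval σ k = 0 := by
  unfold sval; rw [dif_neg]; omega

lemma sval_zero (σ : Fin (2*n) → Fin (n+1)) : sval σ 0 = 0 := by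
  unfold sval; rw [dif_neg]; omega

lemma sval_coe (σ : Fin (2*n) → Fin (n+1)) (i : Fin (2*n)) :
    sval σ ((i : ℕ) + 1) = (σ i : ℕ) := by
  unfold sval
  rw [dif_pos ⟨by omega, by omega⟩]
  rfl

lemma card_pos_filter (σ : Fin (2*n) → Fin (n+1)) (v : ℕ) (hv1 : 1 ≤ v) (hv2 : v ≤ n)
    (w : Fin (n+1)) (hw : (w : ℕ) = v) :
    (Finset.univ.filter (fun i => σ i = w)).card
      = ((Finset.Icc 1 (2*n)).filter (fun k => sval σ k = v)).card := by
  have h2n : 0 < 2*n := by omega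
  refine Finset.card_nbij' (i := fun a => (a : ℕ) + 1)
    (j := fun k => (⟨(k-1) % (2*n), Nat.mod_lt _ h2n⟩ : Fin (2*n))) ?_ ?_ ?_ ?_
  · intro a ha
    simp only [Finset.mem_coe, Finset.mem_filter, Finset.mem_univ, true_and] at ha
    simp only [Finset.mem_coe, Finset.mem_filter, Finset.mem_Icc]
    refine ⟨⟨by omega, by omega⟩, ?_⟩
    rw [sval_coe, ha, hw]
  · intro k hk
    simp only [Finset.mem_coe, Finset.mem_filter, Finset.mem_Icc] at hk
    simp only [Finset.mem_coe, Finset.mem_filter, Finset.mem_univ, true_and]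
    obtain ⟨⟨hk1, hk2⟩, hkv⟩ := hk
    unfold sval at hkv
    rw [dif_pos ⟨hk1, hk2⟩] at hkv
    apply Fin.ext
    rw [hw, ← hkv]
    congr 2
    exact Fin.ext (Nat.mod_eq_of_lt (show k - 1 < 2*n by omega))
  · intro a ha; exact Fin.ext (Nat.mod_eq_of_lt a.is_lt)
  · intro k hk
    simp only [Finset.mem_coe, Finset.mem_filter, Finset.mem_Icc] at hk
    show (k-1) % (2*n) + 1 = k
    rw [Nat.mod_eq_of_lt (by omega)]; omega

lemma mem_stirling_iff (σ : Fin (2*n) → Fin (n+1)) :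
    σ ∈ StirlingSet n ↔
      (∀ v : ℕ, 1 ≤ v → v ≤ n →
        ((Finset.Icc 1 (2*n)).filter (fun k => sval σ k = v)).card = 2) ∧
      (∀ i j k : ℕ, 1 ≤ i → i < j → j < k → k ≤ 2*n →
        sval σ i = sval σ k → sval σ i < sval σ j) := by
  unfold StirlingSet
  rw [Finset.mem_filter]
  simp only [Finset.mem_univ, true_and]
  constructor
  · rintro ⟨hcnt, htri⟩
    constructor
    · intro v hv1 hv2
      rw [← card_pos_filter σ v hv1 hv2 ⟨v, by omega⟩ rfl]
      exact hcnt ⟨v, by omega⟩ (by simpa using by omega)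
    · intro i j k hi hij hjk hk hik
      have hi' : i - 1 < 2*n := by omega
      have hj' : j - 1 < 2*n := by omega
      have hk' : k - 1 < 2*n := by omega
      have e1 : sval σ i = (σ ⟨i-1, hi'⟩ : ℕ) := by unfold sval; rw [dif_pos ⟨by omega, by omega⟩]
      have e2 : sval σ j = (σ ⟨j-1, hj'⟩ : ℕ) := by unfold sval; rw [dif_pos ⟨by omega, by omega⟩]
      have e3 : sval σ k = (σ ⟨k-1, hk'⟩ : ℕ) := by unfold sval; rw [dif_pos ⟨by omega, by omega⟩]
      rw [e1, e2]
      have := htri ⟨i-1, hi'⟩ ⟨j-1, hj'⟩ ⟨k-1, hk'⟩ (Fin.mk_lt_mk.mpr (by omega))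
        (Fin.mk_lt_mk.mpr (by omega)) (Fin.ext (by rw [e1, e3] at hik; exact hik))
      exact this
  · rintro ⟨hcnt, htri⟩
    constructor
    · intro v hv
      have hv2 : (v : ℕ) ≤ n := Nat.lt_succ_iff.mp v.is_lt
      rw [card_pos_filter σ (v : ℕ) (by omega) hv2 v rfl]
      exact hcnt (v:ℕ) (by omega) hv2
    · intro i j k hij hjk hik
      have := htri ((i:ℕ)+1) ((j:ℕ)+1) ((k:ℕ)+1) (by omega)
        (Nat.succ_lt_succ hij) (Nat.succ_lt_succ hjk) (by omega)
        (by rw [sval_coe, sval_coe]; exact congrArg _ hik)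
      rw [sval_coe, sval_coe] at this
      exact this

end Basics

section Chunk2
variable {n : ℕ}

lemma sval_pos {σ : Fin (2*n) → Fin (n+1)} (hσ : σ ∈ StirlingSet n) {k : ℕ}
    (h1 : 1 ≤ k) (h2 : k ≤ 2*n) : 1 ≤ sval σ k := by
  unfold StirlingSet at hσ
  rw [Finset.mem_filter] at hσ
  obtain ⟨-, hcnt, -⟩ := hσ
  have key : (Finset.univ.filter (fun i => σ i = (0 : Fin (n+1)))).card = 0 := by
    have hfib : ∑ v : Fin (n+1), (Finset.univ.filter (fun i => σ i = v)).card
        = (Finset.univ : Finset (Fin (2*n))).card :=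
      (Finset.card_eq_sum_card_fiberwise (fun i _ => Finset.mem_univ (σ i))).symm
    rw [Finset.card_univ, Fintype.card_fin] at hfib
    rw [← Finset.sum_erase_add _ _ (Finset.mem_univ (0 : Fin (n+1)))] at hfib
    have hrest : ∑ v ∈ Finset.univ.erase (0 : Fin (n+1)),
        (Finset.univ.filter (fun i => σ i = v)).card = n * 2 := by
      rw [Finset.sum_congr rfl (fun v hv => hcnt v (by
        simp only [Finset.mem_erase, Finset.mem_univ, and_true] at hv
        exact fun h => hv (Fin.ext (by simpa using h))))]
      rw [Finset.sum_const, Finset.card_erase_of_mem (Finset.mem_univ _), Finset.card_univ,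
        Fintype.card_fin]
      simp [Nat.mul_comm]
    omega
  have hne : σ ⟨k-1, by omega⟩ ≠ 0 := by
    intro h
    have : (⟨k-1, by omega⟩ : Fin (2*n)) ∈ Finset.univ.filter (fun i => σ i = (0 : Fin (n+1))) := by
      simp [h]
    rw [Finset.card_eq_zero] at key
    simp [key] at this
  unfold sval
  rw [dif_pos ⟨h1, h2⟩]
  refine Nat.one_le_iff_ne_zero.mpr fun h0 => hne (Fin.ext ?_)
  simp [h0]

/-- Insert the pair `(n+1)(n+1)` after (1-based) position `i` (i.e. at gap `i`, `0 ≤ i ≤ 2n`). -/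
def ins (σ : Fin (2*n) → Fin (n+1)) (i : ℕ) : Fin (2*(n+1)) → Fin (n+2) :=
  fun j => if h : (j : ℕ) < i ∧ (j : ℕ) < 2*n then
      ⟨(σ ⟨(j : ℕ), h.2⟩ : ℕ), Nat.lt_succ_of_lt (Fin.is_lt _)⟩
    else if h2 : (j : ℕ) < i + 2 then ⟨n+1, Nat.lt_succ_self _⟩
    else ⟨(σ ⟨(j : ℕ) - 2, by omega⟩ : ℕ), Nat.lt_succ_of_lt (Fin.is_lt _)⟩

lemma sval_ins (σ : Fin (2*n) → Fin (n+1)) {i : ℕ} (hi : i ≤ 2*n) (k : ℕ) :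
    sval (ins σ i) k = if k ≤ i then sval σ k
      else if k ≤ i + 2 then n + 1 else sval σ (k - 2) := by
  rcases Nat.eq_zero_or_pos k with rfl | hk
  · simp [sval_zero]
  rcases Nat.lt_or_ge (2*(n+1)) k with hbig | hk2
  · rw [sval_eq_zero_of_gt _ hbig]
    rw [if_neg (by omega), if_neg (by omega), sval_eq_zero_of_gt _ (by omega)]
  -- now 1 ≤ k ≤ 2n+2
  have hlt : k - 1 < 2*(n+1) := by omega
  have hsv : sval (ins σ i) k = (ins σ i ⟨k-1, hlt⟩ : ℕ) := by
    unfold sval; rw [dif_pos ⟨hk, hk2⟩]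
  set j : Fin (2*(n+1)) := ⟨k-1, hlt⟩ with hjdef
  have hj : (j : ℕ) = k - 1 := rfl
  rw [hsv]
  unfold ins
  rcases Nat.lt_or_ge (k-1) i with h1 | h1
  · rw [dif_pos ⟨by omega, by omega⟩, if_pos (by omega)]
    unfold sval
    rw [dif_pos (show 1 ≤ k ∧ k ≤ 2*n by omega)]
  · rw [dif_neg (by omega)]
    rcases Nat.lt_or_ge (k-1) (i+2) with h2 | h2
    · rw [dif_pos (by omega), if_neg (by omega), if_pos (by omega)]
    · rw [dif_neg (by omega), if_neg (by omega), if_neg (by omega)]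
      unfold sval
      rw [dif_pos (show 1 ≤ k - 2 ∧ k - 2 ≤ 2*n by omega)]
      show ((σ ⟨(j:ℕ) - 2, _⟩ : Fin (n+1)) : ℕ) = _
      congr 2

end Chunk2

section Chunk3
variable {n : ℕ}

lemma ins_mem {σ : Fin (2*n) → Fin (n+1)} (hσ : σ ∈ StirlingSet n) {i : ℕ} (hi : i ≤ 2*n) :
    ins σ i ∈ StirlingSet (n+1) := by
  obtain ⟨hcnt, htri⟩ := (mem_stirling_iff σ).mp hσ
  rw [mem_stirling_iff]
  constructor
  · intro v hv1 hv2
    rcases Nat.lt_or_ge v (n+1) with hvn | hvn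
    · -- v ≤ n
      have hvn' : v ≤ n := by omega
      refine Eq.trans (Eq.symm (Finset.card_nbij'
        (i := fun k => if k ≤ i then k else k + 2)
        (j := fun k => if k ≤ i then k else k - 2) ?_ ?_ ?_ ?_)) (hcnt v hv1 hvn')
      · intro a ha
        dsimp only
        simp only [Finset.mem_coe, Finset.mem_filter, Finset.mem_Icc] at ha ⊢
        obtain ⟨⟨ha1, ha2⟩, hav⟩ := ha
        by_cases h : a ≤ i
        · rw [if_pos h]
          refine ⟨⟨by omega, by omega⟩, ?_⟩
          rw [sval_ins σ hi, if_pos h]; exact hav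
        · rw [if_neg h]
          refine ⟨⟨by omega, by omega⟩, ?_⟩
          rw [sval_ins σ hi, if_neg (by omega), if_neg (by omega)]
          simpa using hav
      · intro k hk
        dsimp only
        simp only [Finset.mem_coe, Finset.mem_filter, Finset.mem_Icc] at hk ⊢
        obtain ⟨⟨hk1, hk2⟩, hkv⟩ := hk
        rw [sval_ins σ hi] at hkv
        by_cases h : k ≤ i
        · rw [if_pos h] at hkv ⊢
          exact ⟨⟨hk1, by omega⟩, hkv⟩
        · rw [if_neg h] at hkv ⊢
          by_cases h2 : k ≤ i + 2
          · rw [if_pos h2] at hkv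
            exact absurd hkv.symm (by omega)
          · rw [if_neg h2] at hkv
            refine ⟨⟨?_, ?_⟩, hkv⟩ <;> omega
      · intro a ha
        dsimp only
        simp only [Finset.mem_coe, Finset.mem_filter, Finset.mem_Icc] at ha
        by_cases h : a ≤ i
        · rw [if_pos h, if_pos h]
        · rw [if_neg h, if_neg (by omega)]; omega
      · intro k hk
        dsimp only
        simp only [Finset.mem_coe, Finset.mem_filter, Finset.mem_Icc] at hk
        obtain ⟨⟨hk1, hk2⟩, hkv⟩ := hk
        rw [sval_ins σ hi] at hkv
        by_cases h : k ≤ i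
        · rw [if_pos h, if_pos h]
        · have h3 : ¬ (k ≤ i + 2) := by
            by_contra hcon
            rw [if_neg h, if_pos hcon] at hkv
            omega
          rw [if_neg h, if_neg (show ¬ (k - 2 ≤ i) by omega)]
          omega
    · -- v = n+1
      have hv : v = n + 1 := by omega
      subst hv
      have hset : ((Finset.Icc 1 (2*(n+1))).filter (fun k => sval (ins σ i) k = n+1))
          = {i+1, i+2} := by
        ext k
        simp only [Finset.mem_filter, Finset.mem_Icc, Finset.mem_insert, Finset.mem_singleton]
        rw [sval_ins σ hi]
        constructor
        · rintro ⟨⟨hk1, hk2⟩, hv⟩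
          by_cases h1 : k ≤ i
          · rw [if_pos h1] at hv; have := sval_le σ k; omega
          · by_cases h2 : k ≤ i + 2
            · omega
            · rw [if_neg h1, if_neg h2] at hv; have := sval_le σ (k-2); omega
        · rintro (rfl | rfl)
          · rw [if_neg (by omega), if_pos (by omega)]
            exact ⟨⟨by omega, by omega⟩, rfl⟩
          · rw [if_neg (by omega), if_pos (by omega)]
            exact ⟨⟨by omega, by omega⟩, rfl⟩
      rw [hset]
      rw [Finset.card_insert_of_notMem (by simp only [Finset.mem_singleton]; omega),
        Finset.card_singleton]
  · intro a b c ha hab hbc hc heq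
    rw [sval_ins σ hi, sval_ins σ hi] at heq
    rw [sval_ins σ hi, sval_ins σ hi]
    by_cases hga : i < a ∧ a ≤ i + 2
    · have hav : (if a ≤ i then sval σ a else if a ≤ i + 2 then n + 1 else sval σ (a-2))
          = n + 1 := by
        rw [if_neg (by omega), if_pos (by omega)]
      rw [hav] at heq ⊢
      by_cases hgc : c ≤ i + 2
      · exfalso; omega
      · have hcv : (if c ≤ i then sval σ c else if c ≤ i + 2 then n + 1 else sval σ (c-2))
            = sval σ (c-2) := by
          rw [if_neg (by omega), if_neg hgc]
        rw [hcv] at heq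
        have := sval_le σ (c-2); exfalso; omega
    · have hta : (if a ≤ i then sval σ a else if a ≤ i+2 then n+1 else sval σ (a-2))
          = sval σ (if a ≤ i then a else a - 2) := by
        by_cases h : a ≤ i
        · rw [if_pos h, if_pos h]
        · rw [if_neg h, if_neg (by omega), if_neg h]
      rw [hta] at heq ⊢
      by_cases hgc : i < c ∧ c ≤ i + 2
      · have hcv : (if c ≤ i then sval σ c else if c ≤ i + 2 then n + 1 else sval σ (c-2))
            = n + 1 := by
          rw [if_neg (by omega), if_pos (by omega)]
        rw [hcv] at heq
        have := sval_le σ (if a ≤ i then a else a - 2); exfalso; omega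
      · have htc : (if c ≤ i then sval σ c else if c ≤ i+2 then n+1 else sval σ (c-2))
            = sval σ (if c ≤ i then c else c - 2) := by
          by_cases h : c ≤ i
          · rw [if_pos h, if_pos h]
          · rw [if_neg h, if_neg (by omega), if_neg h]
        rw [htc] at heq
        by_cases hgb : i < b ∧ b ≤ i + 2
        · have hbv : (if b ≤ i then sval σ b else if b ≤ i + 2 then n + 1 else sval σ (b-2))
              = n + 1 := by
            rw [if_neg (by omega), if_pos (by omega)]
          rw [hbv]
          have := sval_le σ (if a ≤ i then a else a - 2); omega
        · have htb : (if b ≤ i then sval σ b else if b ≤ i+2 then n+1 else sval σ (b-2))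
              = sval σ (if b ≤ i then b else b - 2) := by
            by_cases h : b ≤ i
            · rw [if_pos h, if_pos h]
            · rw [if_neg h, if_neg (by omega), if_neg h]
          rw [htb]
          refine htri _ _ _ ?_ ?_ ?_ ?_ heq <;> split_ifs <;> omega

end Chunk3

section Chunk4
variable {n : ℕ}

open Classical in
noncomputable def delPos (τ : Fin (2*(n+1)) → Fin (n+2)) : ℕ :=
  if h : ∃ k, sval τ k = n + 1 then Nat.find h else 1

noncomputable def del (τ : Fin (2*(n+1)) → Fin (n+2)) : Fin (2*n) → Fin (n+1) :=
  fun j => ⟨min (if (j:ℕ) + 1 < delPos τ then sval τ ((j:ℕ)+1) else sval τ ((j:ℕ)+3)) n,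
    Nat.lt_succ_of_le (min_le_right _ _)⟩

lemma eq_of_sval {σ σ' : Fin (2*n) → Fin (n+1)} (h : ∀ k, sval σ k = sval σ' k) : σ = σ' := by
  funext j
  apply Fin.ext
  have := h ((j:ℕ)+1)
  rw [sval_coe, sval_coe] at this
  exact this

lemma delPos_ins (σ : Fin (2*n) → Fin (n+1)) {i : ℕ} (hi : i ≤ 2*n) :
    delPos (ins σ i) = i + 1 := by
  have hP : sval (ins σ i) (i+1) = n + 1 := by
    rw [sval_ins σ hi, if_neg (by omega), if_pos (by omega)]
  have hex : ∃ k, sval (ins σ i) k = n + 1 := ⟨i+1, hP⟩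
  rw [delPos, dif_pos hex, Nat.find_eq_iff]
  refine ⟨hP, fun k hk hPk => ?_⟩
  rw [sval_ins σ hi, if_pos (by omega)] at hPk
  have := sval_le σ k; omega

lemma del_ins (σ : Fin (2*n) → Fin (n+1)) {i : ℕ} (hi : i ≤ 2*n) :
    del (ins σ i) = σ := by
  apply eq_of_sval
  intro k
  rcases Nat.eq_zero_or_pos k with rfl | hk
  · rw [sval_zero, sval_zero]
  rcases Nat.lt_or_ge (2*n) k with hbig | hk2
  · rw [sval_eq_zero_of_gt _ hbig, sval_eq_zero_of_gt _ hbig]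
  have hmk : sval (del (ins σ i)) k = (del (ins σ i) ⟨k-1, by omega⟩ : ℕ) := by
    unfold sval; rw [dif_pos ⟨hk, hk2⟩]
  rw [hmk]
  show min (if (k-1) + 1 < delPos (ins σ i) then sval (ins σ i) ((k-1)+1)
      else sval (ins σ i) ((k-1)+3)) n = sval σ k
  rw [delPos_ins σ hi]
  by_cases h : k ≤ i
  · rw [if_pos (by omega), sval_ins σ hi]
    rw [show (k-1)+1 = k by omega, if_pos h]
    have hs := sval_le σ k
    omega
  · rw [if_neg (by omega), sval_ins σ hi]
    rw [show (k-1)+3 = k + 2 by omega, if_neg (by omega), if_neg (by omega)]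
    rw [show k+2-2 = k by omega]
    have hs := sval_le σ k
    omega

lemma delPos_spec {τ : Fin (2*(n+1)) → Fin (n+2)} (hτ : τ ∈ StirlingSet (n+1)) :
    1 ≤ delPos τ ∧ delPos τ + 1 ≤ 2*(n+1) ∧ sval τ (delPos τ) = n+1 ∧
      sval τ (delPos τ + 1) = n+1 ∧ (∀ k, sval τ k = n+1 → k = delPos τ ∨ k = delPos τ + 1) := by
  obtain ⟨hcnt, htri⟩ := (mem_stirling_iff τ).mp hτ
  have hcard := hcnt (n+1) (by omega) (by omega)
  obtain ⟨x, y, hxy, hS⟩ := Finset.card_eq_two.mp hcard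
  have hx : x ∈ (Finset.Icc 1 (2*(n+1))).filter (fun k => sval τ k = n+1) := by
    rw [hS]; simp
  have hy : y ∈ (Finset.Icc 1 (2*(n+1))).filter (fun k => sval τ k = n+1) := by
    rw [hS]; simp
  simp only [Finset.mem_filter, Finset.mem_Icc] at hx hy
  have hmem : ∀ k, sval τ k = n+1 → (k = x ∨ k = y) := by
    intro k hkv
    have hk1 : 1 ≤ k ∧ k ≤ 2*(n+1) := by
      by_contra hcon
      rw [show sval τ k = 0 by unfold sval; rw [dif_neg]; omega] at hkv
      omega
    have : k ∈ (Finset.Icc 1 (2*(n+1))).filter (fun k => sval τ k = n+1) := by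
      simp only [Finset.mem_filter, Finset.mem_Icc]
      exact ⟨hk1, hkv⟩
    rw [hS] at this
    simpa using this
  obtain ⟨a, b, hab, ha1, hb2, hva, hvb, hmem'⟩ :
      ∃ a b, a < b ∧ 1 ≤ a ∧ b ≤ 2*(n+1) ∧ sval τ a = n+1 ∧ sval τ b = n+1 ∧
        (∀ k, sval τ k = n+1 → k = a ∨ k = b) := by
    rcases Nat.lt_or_ge x y with h | h
    · exact ⟨x, y, h, hx.1.1, hy.1.2, hx.2, hy.2, hmem⟩
    · have hyx : y < x := by omega
      exact ⟨y, x, hyx, hy.1.1, hx.1.2, hy.2, hx.2, fun k hk => (hmem k hk).symm⟩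
  have hadj : b = a + 1 := by
    by_contra hcon
    have := htri a (a+1) b (by omega) (by omega) (by omega) (by omega) (by rw [hva, hvb])
    have hle := sval_le τ (a+1)
    omega
  have hex : ∃ k, sval τ k = n + 1 := ⟨a, hva⟩
  have hfind : delPos τ = a := by
    rw [delPos, dif_pos hex, Nat.find_eq_iff]
    refine ⟨hva, fun k hk hPk => ?_⟩
    rcases hmem' k hPk with rfl | rfl <;> omega
  rw [hfind]
  refine ⟨by omega, by omega, hva, by rw [show a + 1 = b by omega]; exact hvb, fun k hk => ?_⟩
  rcases hmem' k hk with rfl | rfl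
  · left; rfl
  · right; omega

lemma sval_del {τ : Fin (2*(n+1)) → Fin (n+2)} (hτ : τ ∈ StirlingSet (n+1)) (k : ℕ) :
    sval (del τ) k = if k < delPos τ then sval τ k
      else if k ≤ 2*n then sval τ (k+2) else 0 := by
  obtain ⟨hp1, hp2, hpv, hpv2, huniq⟩ := delPos_spec hτ
  rcases Nat.eq_zero_or_pos k with rfl | hk
  · rw [sval_zero, if_pos (by omega), sval_zero]
  rcases Nat.lt_or_ge (2*n) k with hbig | hk2
  · rw [sval_eq_zero_of_gt _ hbig, if_neg (by omega), if_neg (by omega)]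
  have hmk : sval (del τ) k = (del τ ⟨k-1, by omega⟩ : ℕ) := by
    unfold sval; rw [dif_pos ⟨hk, hk2⟩]
  rw [hmk]
  show min (if (k-1) + 1 < delPos τ then sval τ ((k-1)+1) else sval τ ((k-1)+3)) n = _
  rw [show (k-1)+1 = k by omega, show (k-1)+3 = k+2 by omega]
  by_cases h : k < delPos τ
  · rw [if_pos h, if_pos h]
    have hle := sval_le τ k
    have hne : sval τ k ≠ n+1 := fun hc => by rcases huniq k hc with rfl | rfl <;> omega
    omega
  · rw [if_neg h, if_neg h, if_pos hk2]
    have hle := sval_le τ (k+2)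
    have hne : sval τ (k+2) ≠ n+1 := fun hc => by rcases huniq _ hc with h' | h' <;> omega
    omega

end Chunk4

section Chunk5
variable {n : ℕ}

lemma ins_del {τ : Fin (2*(n+1)) → Fin (n+2)} (hτ : τ ∈ StirlingSet (n+1)) :
    ins (del τ) (delPos τ - 1) = τ := by
  obtain ⟨hp1, hp2, hpv, hpv2, huniq⟩ := delPos_spec hτ
  have hple : delPos τ - 1 ≤ 2*n := by omega
  apply eq_of_sval
  intro k
  rw [sval_ins _ hple]
  by_cases h : k ≤ delPos τ - 1
  · rw [if_pos h, sval_del hτ, if_pos (by omega)]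
  · by_cases h2 : k ≤ delPos τ - 1 + 2
    · rw [if_neg h, if_pos h2]
      have : k = delPos τ ∨ k = delPos τ + 1 := by omega
      rcases this with rfl | rfl
      · exact hpv.symm
      · exact hpv2.symm
    · rw [if_neg h, if_neg h2, sval_del hτ, if_neg (by omega)]
      by_cases h3 : k - 2 ≤ 2*n
      · rw [if_pos h3, show k - 2 + 2 = k by omega]
      · rw [if_neg h3, sval_eq_zero_of_gt τ (by omega)]

lemma del_mem {τ : Fin (2*(n+1)) → Fin (n+2)} (hτ : τ ∈ StirlingSet (n+1)) :
    del τ ∈ StirlingSet n := by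
  obtain ⟨hp1, hp2, hpv, hpv2, huniq⟩ := delPos_spec hτ
  obtain ⟨hcnt, htri⟩ := (mem_stirling_iff τ).mp hτ
  rw [mem_stirling_iff]
  constructor
  · intro v hv1 hv2
    refine Eq.trans (Finset.card_nbij'
      (i := fun k => if k < delPos τ then k else k + 2)
      (j := fun k => if k < delPos τ then k else k - 2) ?_ ?_ ?_ ?_)
      (hcnt v hv1 (by omega))
    · intro a ha
      dsimp only
      simp only [Finset.mem_coe, Finset.mem_filter, Finset.mem_Icc] at ha ⊢
      obtain ⟨⟨ha1, ha2⟩, hav⟩ := ha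
      rw [sval_del hτ, if_pos ha2] at hav
      by_cases h : a < delPos τ
      · rw [if_pos h] at hav
        rw [if_pos h]
        exact ⟨⟨ha1, by omega⟩, hav⟩
      · rw [if_neg h] at hav
        rw [if_neg h]
        exact ⟨⟨by omega, by omega⟩, hav⟩
    · intro k hk
      dsimp only
      simp only [Finset.mem_coe, Finset.mem_filter, Finset.mem_Icc] at hk ⊢
      obtain ⟨⟨hk1, hk2⟩, hkv⟩ := hk
      have hkp : k ≠ delPos τ ∧ k ≠ delPos τ + 1 := by
        constructor <;> rintro rfl <;> omega
      by_cases h : k < delPos τ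
      · rw [if_pos h]
        refine ⟨⟨hk1, by omega⟩, ?_⟩
        rw [sval_del hτ, if_pos h]
        exact hkv
      · rw [if_neg h]
        refine ⟨⟨by omega, by omega⟩, ?_⟩
        rw [sval_del hτ, if_neg (show ¬ (k - 2 < delPos τ) by omega),
          if_pos (show k - 2 ≤ 2*n by omega), show k - 2 + 2 = k by omega]
        exact hkv
    · intro a ha
      dsimp only
      by_cases h : a < delPos τ
      · rw [if_pos h, if_pos h]
      · rw [if_neg h, if_neg (by omega)]; omega
    · intro k hk
      dsimp only
      simp only [Finset.mem_coe, Finset.mem_filter, Finset.mem_Icc] at hk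
      obtain ⟨⟨hk1, hk2⟩, hkv⟩ := hk
      have hkp : k ≠ delPos τ ∧ k ≠ delPos τ + 1 := by
        constructor <;> rintro rfl <;> omega
      by_cases h : k < delPos τ
      · rw [if_pos h, if_pos h]
      · rw [if_neg h, if_neg (show ¬ (k - 2 < delPos τ) by omega)]
        omega
  · intro a b c ha hab hbc hc heq
    have hval : ∀ k, 1 ≤ k → k ≤ 2*n →
        sval (del τ) k = sval τ (if k < delPos τ then k else k + 2) := by
      intro k h1 h2
      rw [sval_del hτ]
      by_cases h : k < delPos τ
      · rw [if_pos h, if_pos h]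
      · rw [if_neg h, if_neg h, if_pos h2]
    rw [hval a (by omega) (by omega), hval c (by omega) (by omega)] at heq
    rw [hval a (by omega) (by omega), hval b (by omega) (by omega)]
    refine htri _ _ _ ?_ ?_ ?_ ?_ heq <;> split_ifs <;> omega

end Chunk5

section Chunk6
variable {n : ℕ}

lemma sum_bij_ins {M : Type*} [AddCommMonoid M] (g : (Fin (2*(n+1)) → Fin (n+2)) → M) :
    ∑ τ ∈ StirlingSet (n+1), g τ
      = ∑ p ∈ (StirlingSet n) ×ˢ (Finset.range (2*n+1)), g (ins p.1 p.2) := by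
  refine (Finset.sum_nbij' (i := fun p => ins p.1 p.2)
    (j := fun τ => (del τ, delPos τ - 1)) ?_ ?_ ?_ ?_ ?_).symm
  · rintro ⟨σ, i⟩ hp
    rw [Finset.mem_product, Finset.mem_range] at hp
    exact ins_mem hp.1 (by omega)
  · intro τ hτ
    rw [Finset.mem_product, Finset.mem_range]
    obtain ⟨hp1, hp2, -⟩ := delPos_spec hτ
    refine ⟨del_mem hτ, ?_⟩
    show delPos τ - 1 < 2*n + 1
    omega
  · rintro ⟨σ, i⟩ hp
    rw [Finset.mem_product, Finset.mem_range] at hp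
    have hi : i ≤ 2*n := by omega
    dsimp only
    rw [delPos_ins σ hi, del_ins σ hi]
    simp
  · intro τ hτ
    dsimp only
    exact ins_del hτ
  · intro p hp
    rfl

end Chunk6

section Chunk7
variable {n : ℕ}

def indA (σ : Fin (2*n) → Fin (n+1)) (j : ℕ) : Prop :=
  sval σ (j-1) < sval σ j ∧ sval σ j = sval σ (j+1)

instance (σ : Fin (2*n) → Fin (n+1)) : DecidablePred (indA σ) := fun _ => by
  unfold indA; infer_instance

lemma indA_bounds {σ : Fin (2*n) → Fin (n+1)} {j : ℕ} (h : indA σ j) :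
    1 ≤ j ∧ j + 1 ≤ 2*n := by
  obtain ⟨h1, h2⟩ := h
  constructor
  · by_contra hc
    have hj : j = 0 := by omega
    subst hj
    simp only [Nat.zero_sub, sval_zero] at h1
    omega
  · by_contra hc
    have hj1 : sval σ (j+1) = 0 := sval_eq_zero_of_gt σ (by omega)
    rw [hj1] at h2
    omega

lemma indA_not_succ {σ : Fin (2*n) → Fin (n+1)} {j : ℕ} (h : indA σ j) : ¬ indA σ (j+1) := by
  rintro ⟨g1, -⟩
  obtain ⟨-, h2⟩ := h
  simp only [Nat.add_sub_cancel] at g1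
  omega

lemma apQ_def' (σ : Fin (2*n) → Fin (n+1)) :
    apQ σ = ((Finset.Icc 2 (2*n-1)).filter (indA σ)).card := rfl

lemma indA_ins (σ : Fin (2*n) → Fin (n+1)) {i : ℕ} (hi : i ≤ 2*n) (j : ℕ) :
    indA (ins σ i) j ↔ ((j < i ∧ indA σ j) ∨ (j = i + 1) ∨ (i + 4 ≤ j ∧ indA σ (j - 2))) := by
  unfold indA
  rw [sval_ins σ hi (j-1), sval_ins σ hi j, sval_ins σ hi (j+1)]
  rcases Nat.lt_or_ge j i with h0 | h0
  · rw [if_pos (by omega), if_pos (by omega), if_pos (by omega)]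
    constructor
    · exact fun h => Or.inl ⟨h0, h⟩
    · rintro (⟨-, h⟩ | h | ⟨h, -⟩)
      · exact h
      · omega
      · omega
  rcases Nat.eq_or_lt_of_le h0 with h1 | h1
  · -- j = i
    rw [if_pos (by omega), if_pos (by omega), if_neg (by omega), if_pos (by omega)]
    have := sval_le σ j
    constructor
    · rintro ⟨-, h⟩; omega
    · rintro (⟨h, -⟩ | h | ⟨h, -⟩) <;> omega
  rcases Nat.eq_or_lt_of_le h1 with h2 | h2
  · -- j = i + 1
    rw [if_pos (by omega), if_neg (by omega), if_pos (by omega), if_neg (by omega),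
      if_pos (by omega)]
    have := sval_le σ (j-1)
    constructor
    · intro _; exact Or.inr (Or.inl (by omega))
    · intro _; exact ⟨by omega, rfl⟩
  rcases Nat.eq_or_lt_of_le h2 with h3 | h3
  · -- j = i + 2
    rw [if_neg (by omega), if_pos (by omega), if_neg (by omega), if_pos (by omega)]
    constructor
    · rintro ⟨h, -⟩; omega
    · rintro (⟨h, -⟩ | h | ⟨h, -⟩) <;> omega
  rcases Nat.eq_or_lt_of_le h3 with h4 | h4
  · -- j = i + 3
    rw [if_neg (by omega), if_pos (by omega), if_neg (by omega), if_neg (by omega)]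
    have := sval_le σ (j-2)
    constructor
    · rintro ⟨h, -⟩; omega
    · rintro (⟨h, -⟩ | h | ⟨h, -⟩) <;> omega
  · -- j ≥ i + 4
    rw [if_neg (by omega), if_neg (by omega), if_neg (by omega), if_neg (by omega),
      if_neg (by omega), if_neg (by omega)]
    rw [show j - 1 - 2 = j - 2 - 1 by omega, show j + 1 - 2 = (j - 2) + 1 by omega]
    constructor
    · exact fun h => Or.inr (Or.inr ⟨by omega, h⟩)
    · rintro (⟨h, -⟩ | h | ⟨-, h⟩)
      · omega
      · omega
      · exact h

lemma apQ_ins_eq (σ : Fin (2*n) → Fin (n+1)) {i : ℕ} (hi : i ≤ 2*n) :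
    apQ (ins σ i)
      + ((if 2 ≤ i ∧ indA σ i then 1 else 0) + (if 2 ≤ i + 1 ∧ indA σ (i+1) then 1 else 0))
      = apQ σ + (if 1 ≤ i then 1 else 0) := by
  have hS : apQ σ = ((Finset.Icc 2 (2*n-1)).filter (indA σ)).card := apQ_def' σ
  set S := (Finset.Icc 2 (2*n-1)).filter (indA σ) with hSdef
  have hT : apQ (ins σ i)
      = ((Finset.Icc 2 (2*(n+1)-1)).filter
          (fun j => (j < i ∧ indA σ j) ∨ (j = i + 1) ∨ (i + 4 ≤ j ∧ indA σ (j - 2)))).card := by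
    rw [apQ_def']
    congr 1
    apply Finset.filter_congr
    intro j _
    simp only [indA_ins σ hi j]
  have hd1 : Disjoint ((Finset.Icc 2 (2*(n+1)-1)).filter (fun j => j = i+1))
      ((Finset.Icc 2 (2*(n+1)-1)).filter (fun j => i+4 ≤ j ∧ indA σ (j-2))) := by
    rw [Finset.disjoint_left]
    intro a ha hb
    simp only [Finset.mem_filter] at ha hb
    obtain ⟨-, hb2, -⟩ := hb
    omega
  have hd2 : Disjoint ((Finset.Icc 2 (2*(n+1)-1)).filter (fun j => j < i ∧ indA σ j))
      (((Finset.Icc 2 (2*(n+1)-1)).filter (fun j => j = i+1))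
        ∪ ((Finset.Icc 2 (2*(n+1)-1)).filter (fun j => i+4 ≤ j ∧ indA σ (j-2)))) := by
    rw [Finset.disjoint_left]
    intro a ha hb
    simp only [Finset.mem_union, Finset.mem_filter] at ha hb
    obtain ⟨-, ha2, -⟩ := ha
    rcases hb with ⟨-, hb⟩ | ⟨-, hb, -⟩ <;> omega
  have hcards : apQ (ins σ i)
      = ((Finset.Icc 2 (2*(n+1)-1)).filter (fun j => j < i ∧ indA σ j)).card
        + (((Finset.Icc 2 (2*(n+1)-1)).filter (fun j => j = i+1)).card
          + ((Finset.Icc 2 (2*(n+1)-1)).filter (fun j => i+4 ≤ j ∧ indA σ (j-2))).card) := by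
    rw [hT, Finset.filter_or, Finset.filter_or, Finset.card_union_of_disjoint hd2,
      Finset.card_union_of_disjoint hd1]
  have hp2 : ((Finset.Icc 2 (2*(n+1)-1)).filter (fun j => j = i+1)).card
      = if 1 ≤ i then 1 else 0 := by
    by_cases h : 1 ≤ i
    · rw [if_pos h, Finset.filter_eq', if_pos (by rw [Finset.mem_Icc]; omega),
        Finset.card_singleton]
    · rw [if_neg h, Finset.filter_eq', if_neg (by rw [Finset.mem_Icc]; omega),
        Finset.card_empty]
  have hp1 : ((Finset.Icc 2 (2*(n+1)-1)).filter (fun j => j < i ∧ indA σ j)).card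
      = (S.filter (fun j => j < i)).card := by
    congr 1
    ext j
    simp only [hSdef, Finset.mem_filter, Finset.mem_Icc]
    constructor
    · rintro ⟨⟨hj1, hj2⟩, hji, hind⟩
      have := indA_bounds hind
      exact ⟨⟨⟨hj1, by omega⟩, hind⟩, hji⟩
    · rintro ⟨⟨⟨hj1, hj2⟩, hind⟩, hji⟩
      exact ⟨⟨hj1, by omega⟩, hji, hind⟩
  have hp3 : ((Finset.Icc 2 (2*(n+1)-1)).filter (fun j => i + 4 ≤ j ∧ indA σ (j-2))).card
      = (S.filter (fun j => i + 2 ≤ j)).card := by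
    refine Finset.card_nbij' (i := fun j => j - 2) (j := fun j => j + 2) ?_ ?_ ?_ ?_
    · intro a ha
      dsimp only
      simp only [Finset.mem_coe, hSdef, Finset.mem_filter, Finset.mem_Icc] at ha ⊢
      obtain ⟨⟨h1, h2⟩, h3, h4⟩ := ha
      have := indA_bounds h4
      exact ⟨⟨⟨by omega, by omega⟩, h4⟩, by omega⟩
    · intro a ha
      dsimp only
      simp only [Finset.mem_coe, hSdef, Finset.mem_filter, Finset.mem_Icc] at ha ⊢
      obtain ⟨⟨⟨h1, h2⟩, h3⟩, h4⟩ := ha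
      refine ⟨⟨by omega, by omega⟩, by omega, ?_⟩
      rw [show a + 2 - 2 = a by omega]
      exact h3
    · intro a ha
      dsimp only
      simp only [Finset.mem_coe, Finset.mem_filter, Finset.mem_Icc] at ha
      omega
    · intro a ha
      dsimp only
      simp only [hSdef, Finset.mem_filter, Finset.mem_Icc] at ha
      omega
  have hsplit1 : (S.filter (fun j => j < i)).card + (S.filter (fun j => ¬ j < i)).card
      = S.card := Finset.card_filter_add_card_filter_not _
  have hsplit2 : ((S.filter (fun j => ¬ j < i)).filter (fun j => j < i + 2)).card
      + ((S.filter (fun j => ¬ j < i)).filter (fun j => ¬ j < i + 2)).card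
      = (S.filter (fun j => ¬ j < i)).card :=
    Finset.card_filter_add_card_filter_not _
  have hhigh : (S.filter (fun j => ¬ j < i)).filter (fun j => ¬ j < i + 2)
      = S.filter (fun j => i + 2 ≤ j) := by
    rw [Finset.filter_filter]
    apply Finset.filter_congr
    intro j _
    constructor
    · rintro ⟨h1, h2⟩; omega
    · intro h; exact ⟨by omega, by omega⟩
  have hmid : (S.filter (fun j => ¬ j < i)).filter (fun j => j < i + 2)
      = ({i, i+1} : Finset ℕ).filter (fun j => 2 ≤ j ∧ indA σ j) := by
    rw [Finset.filter_filter]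
    ext j
    simp only [hSdef, Finset.mem_filter, Finset.mem_Icc, Finset.mem_insert,
      Finset.mem_singleton]
    constructor
    · rintro ⟨⟨⟨h1, h2⟩, h3⟩, h4, h5⟩
      exact ⟨by omega, h1, h3⟩
    · rintro ⟨h1, h2, h3⟩
      have := indA_bounds h3
      exact ⟨⟨⟨h2, by omega⟩, h3⟩, by omega, by omega⟩
  have hmidcard : (({i, i+1} : Finset ℕ).filter (fun j => 2 ≤ j ∧ indA σ j)).card
      = (if 2 ≤ i ∧ indA σ i then 1 else 0) + (if 2 ≤ i + 1 ∧ indA σ (i+1) then 1 else 0) := by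
    rw [show ({i, i+1} : Finset ℕ) = insert i {i+1} from rfl, Finset.filter_insert,
      Finset.filter_singleton]
    by_cases h1 : 2 ≤ i ∧ indA σ i <;> by_cases h2 : 2 ≤ i + 1 ∧ indA σ (i+1)
    · rw [if_pos h1, if_pos h2, if_pos h1, if_pos h2,
        Finset.card_insert_of_notMem (by simp only [Finset.mem_singleton]; omega),
        Finset.card_singleton]
    · rw [if_pos h1, if_neg h2, if_pos h1, if_neg h2]
      simp
    · rw [if_neg h1, if_pos h2, if_neg h1, if_pos h2]
      simp
    · rw [if_neg h1, if_neg h2, if_neg h1, if_neg h2]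
      simp
  rw [hcards, hp1, hp2, hp3, ← hmidcard, hS]
  rw [hmid] at hsplit2
  rw [hhigh] at hsplit2
  omega
end Chunk7

section Chunk8
variable {n : ℕ}

lemma flag_iff {σ : Fin (2*n) → Fin (n+1)} (hσ : σ ∈ StirlingSet n) :
    (1 ≤ n ∧ sval σ 1 = sval σ 2) ↔ indA σ 1 := by
  unfold indA
  constructor
  · rintro ⟨h1, h2⟩
    refine ⟨?_, h2⟩
    rw [show (1:ℕ) - 1 = 0 from rfl, sval_zero]
    exact sval_pos hσ (by omega) (by omega)
  · rintro ⟨h1, h2⟩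
    rw [show (1:ℕ) - 1 = 0 from rfl, sval_zero] at h1
    have hn : 1 ≤ n := by
      by_contra hc
      rw [sval_eq_zero_of_gt σ (by omega)] at h1
      omega
    exact ⟨hn, h2⟩

lemma fapQ_succ_eq (τ : Fin (2*(n+1)) → Fin (n+2)) :
    fapQ τ = 2 * apQ τ + (if sval τ 1 = sval τ 2 then 1 else 0) := by
  unfold fapQ
  by_cases h : sval τ 1 = sval τ 2
  · rw [if_pos ⟨by omega, h⟩, if_pos h]
  · rw [if_neg (by tauto), if_neg h]
    omega

lemma fapQ_eq_ind {σ : Fin (2*n) → Fin (n+1)} (hσ : σ ∈ StirlingSet n) :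
    fapQ σ = 2 * apQ σ + (if indA σ 1 then 1 else 0) := by
  unfold fapQ
  by_cases h : indA σ 1
  · rw [if_pos ((flag_iff hσ).mpr h), if_pos h]
  · rw [if_neg (fun hc => h ((flag_iff hσ).mp hc)), if_neg h]
    omega

lemma flag_ins_iff {σ : Fin (2*n) → Fin (n+1)} (hσ : σ ∈ StirlingSet n) {i : ℕ}
    (hi : i ≤ 2*n) (h2 : 2 ≤ i) :
    (sval (ins σ i) 1 = sval (ins σ i) 2) ↔ indA σ 1 := by
  rw [sval_ins σ hi 1, sval_ins σ hi 2, if_pos (show (1:ℕ) ≤ i by omega),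
    if_pos (show (2:ℕ) ≤ i by omega)]
  have hn : 1 ≤ n := by omega
  exact ⟨fun h => (flag_iff hσ).mp ⟨hn, h⟩, fun h => ((flag_iff hσ).mp ((flag_iff hσ).mpr h)).2⟩

lemma fap_ins_P0 {σ : Fin (2*n) → Fin (n+1)} (hσ : σ ∈ StirlingSet n) {i : ℕ} (hi : i ≤ 2*n)
    (h : (i = 0 ∧ indA σ 1) ∨ (2 ≤ i ∧ indA σ i) ∨ (1 ≤ i ∧ indA σ (i+1))) :
    fapQ (ins σ i) = fapQ σ := by
  have hap := apQ_ins_eq σ hi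
  rw [fapQ_succ_eq, fapQ_eq_ind hσ]
  rcases h with ⟨rfl, hind⟩ | ⟨h2i, hind⟩ | ⟨h1i, hind⟩
  · rw [if_pos hind]
    have hfl : sval (ins σ 0) 1 = sval (ins σ 0) 2 := by
      rw [sval_ins σ hi 1, sval_ins σ hi 2, if_neg (by omega), if_pos (by omega),
        if_neg (by omega), if_pos (by omega)]
    rw [if_pos hfl]
    rw [if_neg (by omega), if_neg (by omega), if_neg (by omega)] at hap
    omega
  · -- 2 ≤ i, ind i
    have hnext : ¬ indA σ (i+1) := indA_not_succ hind
    rw [if_pos ⟨h2i, hind⟩, if_neg (by rintro ⟨-, hc⟩; exact hnext hc),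
      if_pos (by omega)] at hap
    by_cases h1 : indA σ 1
    · rw [if_pos ((flag_ins_iff hσ hi h2i).mpr h1), if_pos h1]; omega
    · rw [if_neg (fun hc => h1 ((flag_ins_iff hσ hi h2i).mp hc)), if_neg h1]; omega
  · -- 1 ≤ i, ind (i+1)
    have hprev : ¬ indA σ i := fun hc => (indA_not_succ hc) hind
    rw [if_neg (by rintro ⟨-, hc⟩; exact hprev hc), if_pos ⟨by omega, hind⟩,
      if_pos (by omega)] at hap
    rcases Nat.eq_or_lt_of_le h1i with h1 | h1
    · -- i = 1
      subst h1
      have hflneg : ¬ (sval (ins σ 1) 1 = sval (ins σ 1) 2) := by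
        rw [sval_ins σ hi 1, sval_ins σ hi 2, if_pos (by omega), if_neg (by omega),
          if_pos (by omega)]
        have := sval_le σ 1
        omega
      rw [if_neg hflneg]
      have hind1 : ¬ indA σ 1 := fun hc => (indA_not_succ hc) hind
      rw [if_neg hind1]
      omega
    · -- 2 ≤ i
      have h2i : 2 ≤ i := by omega
      by_cases h1' : indA σ 1
      · rw [if_pos ((flag_ins_iff hσ hi h2i).mpr h1'), if_pos h1']; omega
      · rw [if_neg (fun hc => h1' ((flag_ins_iff hσ hi h2i).mp hc)), if_neg h1']; omega

lemma fap_ins_P1 {σ : Fin (2*n) → Fin (n+1)} (hσ : σ ∈ StirlingSet n) {i : ℕ} (hi : i ≤ 2*n)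
    (h : (i = 0 ∧ ¬ indA σ 1) ∨ (i = 1 ∧ indA σ 1)) :
    fapQ (ins σ i) = fapQ σ + 1 := by
  have hap := apQ_ins_eq σ hi
  rw [fapQ_succ_eq, fapQ_eq_ind hσ]
  rcases h with ⟨rfl, hind⟩ | ⟨rfl, hind⟩
  · rw [if_neg hind]
    have hfl : sval (ins σ 0) 1 = sval (ins σ 0) 2 := by
      rw [sval_ins σ hi 1, sval_ins σ hi 2, if_neg (by omega), if_pos (by omega),
        if_neg (by omega), if_pos (by omega)]
    rw [if_pos hfl]
    rw [if_neg (by omega), if_neg (by omega), if_neg (by omega)] at hap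
    omega
  · -- i = 1, ind 1
    have hnext : ¬ indA σ 2 := indA_not_succ hind
    rw [if_neg (by omega), if_neg (by rintro ⟨-, hc⟩; exact hnext hc), if_pos (by omega)] at hap
    have hflneg : ¬ (sval (ins σ 1) 1 = sval (ins σ 1) 2) := by
      rw [sval_ins σ hi 1, sval_ins σ hi 2, if_pos (by omega), if_neg (by omega),
        if_pos (by omega)]
      have := sval_le σ 1
      omega
    rw [if_neg hflneg, if_pos hind]
    omega

lemma fap_ins_P2 {σ : Fin (2*n) → Fin (n+1)} (hσ : σ ∈ StirlingSet n) {i : ℕ} (hi : i ≤ 2*n)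
    (h0 : ¬ ((i = 0 ∧ indA σ 1) ∨ (2 ≤ i ∧ indA σ i) ∨ (1 ≤ i ∧ indA σ (i+1))))
    (h1 : ¬ ((i = 0 ∧ ¬ indA σ 1) ∨ (i = 1 ∧ indA σ 1))) :
    fapQ (ins σ i) = fapQ σ + 2 := by
  push_neg at h0 h1
  obtain ⟨h0a, h0b, h0c⟩ := h0
  have hap := apQ_ins_eq σ hi
  rw [fapQ_succ_eq, fapQ_eq_ind hσ]
  have hine : i ≠ 0 := fun hc => (h0a hc) (h1.1 hc)
  have h1i : 1 ≤ i := by omega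
  have hnoind : ¬ indA σ (i+1) := fun hc => h0c h1i hc
  rw [if_neg (fun hc => h0b hc.1 hc.2), if_neg (fun hc => hnoind hc.2),
    if_pos (by omega)] at hap
  rcases Nat.eq_or_lt_of_le h1i with h1e | h2i
  · subst h1e
    have hflneg : ¬ (sval (ins σ 1) 1 = sval (ins σ 1) 2) := by
      rw [sval_ins σ hi 1, sval_ins σ hi 2, if_pos (by omega), if_neg (by omega),
        if_pos (by omega)]
      have := sval_le σ 1
      omega
    rw [if_neg hflneg, if_neg (h1.2 rfl)]
    omega
  · have h2i' : 2 ≤ i := by omega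
    by_cases h1' : indA σ 1
    · rw [if_pos ((flag_ins_iff hσ hi h2i').mpr h1'), if_pos h1']; omega
    · rw [if_neg (fun hc => h1' ((flag_ins_iff hσ hi h2i').mp hc)), if_neg h1']; omega

end Chunk8

section Chunk9
variable {n : ℕ}

lemma card_P0 {σ : Fin (2*n) → Fin (n+1)} (hσ : σ ∈ StirlingSet n) :
    ((Finset.range (2*n+1)).filter
      (fun i => (i = 0 ∧ indA σ 1) ∨ (2 ≤ i ∧ indA σ i) ∨ (1 ≤ i ∧ indA σ (i+1)))).card
      = fapQ σ := by
  rw [Finset.filter_or, Finset.filter_or]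
  rw [Finset.card_union_of_disjoint, Finset.card_union_of_disjoint]
  rotate_left
  · rw [Finset.disjoint_left]
    intro a ha hb
    simp only [Finset.mem_filter] at ha hb
    exact (indA_not_succ ha.2.2) hb.2.2
  · rw [Finset.disjoint_left]
    intro a ha hb
    simp only [Finset.mem_union, Finset.mem_filter] at ha hb
    rcases hb with ⟨-, hb, -⟩ | ⟨-, hb, -⟩ <;> omega
  have hc1 : ((Finset.range (2*n+1)).filter (fun i => i = 0 ∧ indA σ 1)).card
      = if indA σ 1 then 1 else 0 := by
    by_cases h : indA σ 1
    · rw [if_pos h]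
      rw [show ((Finset.range (2*n+1)).filter (fun i => i = 0 ∧ indA σ 1))
          = (Finset.range (2*n+1)).filter (fun i => i = 0) from
        Finset.filter_congr (fun x _ => by simp [h])]
      rw [Finset.filter_eq', if_pos (by rw [Finset.mem_range]; omega), Finset.card_singleton]
    · rw [if_neg h, Finset.filter_false_of_mem (fun x _ => by simp [h]), Finset.card_empty]
  have hc2 : ((Finset.range (2*n+1)).filter (fun i => 2 ≤ i ∧ indA σ i)).card = apQ σ := by
    rw [apQ_def']
    congr 1
    ext j
    simp only [Finset.mem_filter, Finset.mem_range, Finset.mem_Icc]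
    constructor
    · rintro ⟨h1, h2, h3⟩
      have := indA_bounds h3
      exact ⟨⟨h2, by omega⟩, h3⟩
    · rintro ⟨⟨h1, h2⟩, h3⟩
      have := indA_bounds h3
      exact ⟨by omega, h1, h3⟩
  have hc3 : ((Finset.range (2*n+1)).filter (fun i => 1 ≤ i ∧ indA σ (i+1))).card = apQ σ := by
    rw [apQ_def']
    refine Finset.card_nbij' (i := fun j => j + 1) (j := fun j => j - 1) ?_ ?_ ?_ ?_
    · intro a ha
      dsimp only
      simp only [Finset.mem_coe, Finset.mem_filter, Finset.mem_range, Finset.mem_Icc] at ha ⊢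
      obtain ⟨h1, h2, h3⟩ := ha
      have := indA_bounds h3
      exact ⟨⟨by omega, by omega⟩, h3⟩
    · intro a ha
      dsimp only
      simp only [Finset.mem_coe, Finset.mem_filter, Finset.mem_range, Finset.mem_Icc] at ha ⊢
      obtain ⟨⟨h1, h2⟩, h3⟩ := ha
      refine ⟨by omega, by omega, ?_⟩
      rw [show a - 1 + 1 = a by omega]
      exact h3
    · intro a ha
      dsimp only
      omega
    · intro a ha
      dsimp only
      simp only [Finset.mem_coe, Finset.mem_filter, Finset.mem_Icc] at ha
      omega
  rw [hc1, hc2, hc3, fapQ_eq_ind hσ]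
  omega

lemma card_P1 {σ : Fin (2*n) → Fin (n+1)} (hσ : σ ∈ StirlingSet n) :
    ((Finset.range (2*n+1)).filter
      (fun i => (i = 0 ∧ ¬ indA σ 1) ∨ (i = 1 ∧ indA σ 1))).card = 1 := by
  by_cases h : indA σ 1
  · rw [show ((Finset.range (2*n+1)).filter
        (fun i => (i = 0 ∧ ¬ indA σ 1) ∨ (i = 1 ∧ indA σ 1)))
        = (Finset.range (2*n+1)).filter (fun i => i = 1) from
      Finset.filter_congr (fun x _ => by simp [h])]
    have hb := indA_bounds h
    rw [Finset.filter_eq', if_pos (by rw [Finset.mem_range]; omega), Finset.card_singleton]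
  · rw [show ((Finset.range (2*n+1)).filter
        (fun i => (i = 0 ∧ ¬ indA σ 1) ∨ (i = 1 ∧ indA σ 1)))
        = (Finset.range (2*n+1)).filter (fun i => i = 0) from
      Finset.filter_congr (fun x _ => by simp [h])]
    rw [Finset.filter_eq', if_pos (by rw [Finset.mem_range]; omega), Finset.card_singleton]

lemma fapQ_le {σ : Fin (2*n) → Fin (n+1)} (hσ : σ ∈ StirlingSet n) : fapQ σ ≤ 2*n := by
  have h0 := card_P0 hσ
  have h1 := card_P1 hσ
  have hsub : ((Finset.range (2*n+1)).filter
      (fun i => (i = 0 ∧ indA σ 1) ∨ (2 ≤ i ∧ indA σ i) ∨ (1 ≤ i ∧ indA σ (i+1)))).card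
      + ((Finset.range (2*n+1)).filter
      (fun i => (i = 0 ∧ ¬ indA σ 1) ∨ (i = 1 ∧ indA σ 1))).card ≤ (Finset.range (2*n+1)).card := by
    rw [← Finset.card_union_of_disjoint]
    · exact Finset.card_le_card (Finset.union_subset (Finset.filter_subset _ _)
        (Finset.filter_subset _ _))
    · rw [Finset.disjoint_left]
      intro a ha hb
      simp only [Finset.mem_filter] at ha hb
      rcases ha.2 with ⟨rfl, hx⟩ | ⟨hx2, hx⟩ | ⟨hx1, hx⟩ <;>
        rcases hb.2 with ⟨he, hy⟩ | ⟨he, hy⟩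
      · exact hy hx
      · omega
      · omega
      · omega
      · omega
      · subst he; exact (indA_not_succ hy) hx
  rw [h0, h1, Finset.card_range] at hsub
  omega

lemma P1_not_P0 {σ : Fin (2*n) → Fin (n+1)} {i : ℕ}
    (h1 : (i = 0 ∧ ¬ indA σ 1) ∨ (i = 1 ∧ indA σ 1)) :
    ¬ ((i = 0 ∧ indA σ 1) ∨ (2 ≤ i ∧ indA σ i) ∨ (1 ≤ i ∧ indA σ (i+1))) := by
  intro h0
  rcases h1 with ⟨rfl, hx⟩ | ⟨rfl, hx⟩ <;> rcases h0 with ⟨he, hy⟩ | ⟨he, hy⟩ | ⟨he, hy⟩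
  · exact hx hy
  · omega
  · omega
  · omega
  · omega
  · exact (indA_not_succ hx) hy

lemma sum_gaps {M : Type*} [AddCommMonoid M] {σ : Fin (2*n) → Fin (n+1)}
    (hσ : σ ∈ StirlingSet n) (g : ℕ → M) :
    ∑ i ∈ Finset.range (2*n+1), g (fapQ (ins σ i))
      = fapQ σ • g (fapQ σ) + g (fapQ σ + 1) + (2*n - fapQ σ) • g (fapQ σ + 2) := by
  rw [← Finset.sum_filter_add_sum_filter_not (Finset.range (2*n+1)) (fun i => (i = 0 ∧ indA σ 1) ∨ (2 ≤ i ∧ indA σ i) ∨ (1 ≤ i ∧ indA σ (i+1)))]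
  rw [← Finset.sum_filter_add_sum_filter_not
    ((Finset.range (2*n+1)).filter (fun i => ¬ ((i = 0 ∧ indA σ 1) ∨ (2 ≤ i ∧ indA σ i) ∨ (1 ≤ i ∧ indA σ (i+1))))) (fun i => (i = 0 ∧ ¬ indA σ 1) ∨ (i = 1 ∧ indA σ 1))]
  have hA : ∑ i ∈ (Finset.range (2*n+1)).filter (fun i => (i = 0 ∧ indA σ 1) ∨ (2 ≤ i ∧ indA σ i) ∨ (1 ≤ i ∧ indA σ (i+1))), g (fapQ (ins σ i))
      = fapQ σ • g (fapQ σ) := by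
    rw [Finset.sum_congr rfl (fun i hi => ?_), Finset.sum_const, card_P0 hσ]
    simp only [Finset.mem_filter, Finset.mem_range] at hi
    rw [fap_ins_P0 hσ (by omega) hi.2]
  have hBset : ((Finset.range (2*n+1)).filter (fun i => ¬ ((i = 0 ∧ indA σ 1) ∨ (2 ≤ i ∧ indA σ i) ∨ (1 ≤ i ∧ indA σ (i+1))))).filter (fun i => (i = 0 ∧ ¬ indA σ 1) ∨ (i = 1 ∧ indA σ 1))
      = (Finset.range (2*n+1)).filter (fun i => (i = 0 ∧ ¬ indA σ 1) ∨ (i = 1 ∧ indA σ 1)) := by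
    rw [Finset.filter_filter]
    apply Finset.filter_congr
    intro i _
    constructor
    · rintro ⟨-, h⟩; exact h
    · intro h; exact ⟨P1_not_P0 h, h⟩
  have hB : ∑ i ∈ ((Finset.range (2*n+1)).filter (fun i => ¬ ((i = 0 ∧ indA σ 1) ∨ (2 ≤ i ∧ indA σ i) ∨ (1 ≤ i ∧ indA σ (i+1))))).filter (fun i => (i = 0 ∧ ¬ indA σ 1) ∨ (i = 1 ∧ indA σ 1)),
      g (fapQ (ins σ i)) = g (fapQ σ + 1) := by
    rw [hBset, Finset.sum_congr rfl (fun i hi => ?_), Finset.sum_const, card_P1 hσ, one_smul]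
    simp only [Finset.mem_filter, Finset.mem_range] at hi
    rw [fap_ins_P1 hσ (by omega) hi.2]
  have hCcard : (((Finset.range (2*n+1)).filter (fun i => ¬ ((i = 0 ∧ indA σ 1) ∨ (2 ≤ i ∧ indA σ i) ∨ (1 ≤ i ∧ indA σ (i+1))))).filter
      (fun i => ¬ ((i = 0 ∧ ¬ indA σ 1) ∨ (i = 1 ∧ indA σ 1)))).card = 2*n - fapQ σ := by
    have e1 := Finset.card_filter_add_card_filter_not (s := Finset.range (2*n+1)) (fun i => (i = 0 ∧ indA σ 1) ∨ (2 ≤ i ∧ indA σ i) ∨ (1 ≤ i ∧ indA σ (i+1)))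
    have e2 := Finset.card_filter_add_card_filter_not
      (s := (Finset.range (2*n+1)).filter (fun i => ¬ ((i = 0 ∧ indA σ 1) ∨ (2 ≤ i ∧ indA σ i) ∨ (1 ≤ i ∧ indA σ (i+1))))) (fun i => (i = 0 ∧ ¬ indA σ 1) ∨ (i = 1 ∧ indA σ 1))
    rw [hBset] at e2
    have h0 := card_P0 hσ
    have h1 := card_P1 hσ
    have hle := fapQ_le hσ
    rw [Finset.card_range] at e1
    omega
  have hC : ∑ i ∈ ((Finset.range (2*n+1)).filter (fun i => ¬ ((i = 0 ∧ indA σ 1) ∨ (2 ≤ i ∧ indA σ i) ∨ (1 ≤ i ∧ indA σ (i+1))))).filter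
      (fun i => ¬ ((i = 0 ∧ ¬ indA σ 1) ∨ (i = 1 ∧ indA σ 1))), g (fapQ (ins σ i)) = (2*n - fapQ σ) • g (fapQ σ + 2) := by
    rw [Finset.sum_congr rfl (fun i hi => ?_), Finset.sum_const, hCcard]
    simp only [Finset.mem_filter, Finset.mem_range] at hi
    rw [fap_ins_P2 hσ (by omega) hi.1.2 hi.2]
  rw [hA, hB, hC, add_assoc]

end Chunk9

section Chunk10

abbrev R3 : Type := MvPolynomial (Fin 3) ℚ

lemma comb (n : ℕ) :
    ∑ τ ∈ StirlingSet (n+1), (X 1 : R3)^(fapQ τ) * X 2^(2*(n+1) - fapQ τ)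
      = ∑ σ ∈ StirlingSet n,
        (fapQ σ • ((X 1 : R3)^(fapQ σ) * X 2^(2*n + 2 - fapQ σ))
          + (X 1^(fapQ σ + 1) * X 2^(2*n + 1 - fapQ σ))
          + (2*n - fapQ σ) • (X 1^(fapQ σ + 2) * X 2^(2*n - fapQ σ))) := by
  rw [sum_bij_ins (g := fun τ => (X 1 : R3)^(fapQ τ) * X 2^(2*(n+1) - fapQ τ))]
  rw [Finset.sum_product]
  apply Finset.sum_congr rfl
  intro σ hσ
  rw [sum_gaps hσ (g := fun t => (X 1 : R3)^t * X 2^(2*(n+1) - t))]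
  have hle := fapQ_le hσ
  rw [show 2*(n+1) - fapQ σ = 2*n + 2 - fapQ σ by omega,
    show 2*(n+1) - (fapQ σ + 1) = 2*n + 1 - fapQ σ by omega,
    show 2*(n+1) - (fapQ σ + 2) = 2*n - fapQ σ by omega]

lemma D_term (D : Derivation ℚ R3 R3)
    (hx : D (X 0) = X 0 * X 1 * X 2)
    (hy : D (X 1) = X 1 * X 2 ^ 2)
    (hz : D (X 2) = X 1 ^ 2 * X 2) (a b : ℕ) :
    D (X 0 * (X 1^a * X 2^b)) = X 0 * (X 1^(a+1) * X 2^(b+1))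
      + a • (X 0 * (X 1^a * X 2^(b+2))) + b • (X 0 * (X 1^(a+2) * X 2^b)) := by
  rw [Derivation.leibniz, Derivation.leibniz, Derivation.leibniz_pow, Derivation.leibniz_pow,
    hx, hy, hz]
  simp only [smul_eq_mul, nsmul_eq_mul]
  cases a with
  | zero => cases b with
    | zero => simp; ring
    | succ b' =>
      simp only [Nat.cast_zero, Nat.zero_sub, Nat.succ_sub_one, Nat.cast_succ, pow_zero]
      push_cast
      ring
  | succ a' => cases b with
    | zero =>
      simp only [Nat.cast_zero, Nat.zero_sub, Nat.succ_sub_one, Nat.cast_succ, pow_zero]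
      push_cast
      ring
    | succ b' =>
      simp only [Nat.succ_sub_one, Nat.cast_succ]
      push_cast
      ring

theorem main_all (D : Derivation ℚ (MvPolynomial (Fin 3) ℚ) (MvPolynomial (Fin 3) ℚ))
    (hx : D (X 0) = X 0 * X 1 * X 2)
    (hy : D (X 1) = X 1 * X 2 ^ 2)
    (hz : D (X 2) = X 1 ^ 2 * X 2) (n : ℕ) :
    (D.toLinearMap ^ n) (X 0) =
      X 0 * ∑ σ ∈ StirlingSet n, X 1 ^ fapQ σ * X 2 ^ (2 * n - fapQ σ) := by
  induction n with
  | zero =>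
    rw [pow_zero, Module.End.one_apply]
    have huniv : StirlingSet 0 = {fun _ => 0} := by
      unfold StirlingSet
      rw [Finset.filter_true_of_mem]
      · apply Finset.eq_singleton_iff_unique_mem.mpr
        refine ⟨Finset.mem_univ _, fun x _ => funext fun i => absurd i.is_lt (by omega)⟩
      · intro σ _
        constructor
        · intro v hv
          exact absurd (by omega : (v : ℕ) = 0) hv
        · intro i
          exact absurd i.is_lt (by omega)
    rw [huniv, Finset.sum_singleton]
    rw [show fapQ ((fun _ => 0) : Fin (2*0) → Fin (0+1)) = 0 by rfl]
    simp
  | succ n ih =>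
    rw [pow_succ', Module.End.mul_apply, ih]
    show D (X 0 * ∑ σ ∈ StirlingSet n, X 1 ^ fapQ σ * X 2 ^ (2*n - fapQ σ)) = _
    have hterms : ∀ σ ∈ StirlingSet n,
        D (X 0 * (X 1 ^ fapQ σ * X 2 ^ (2*n - fapQ σ)))
          = X 0 * (X 1^(fapQ σ + 1) * X 2^(2*n - fapQ σ + 1))
            + fapQ σ • (X 0 * (X 1^(fapQ σ) * X 2^(2*n - fapQ σ + 2)))
            + (2*n - fapQ σ) • (X 0 * (X 1^(fapQ σ + 2) * X 2^(2*n - fapQ σ))) :=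
      fun σ _ => D_term D hx hy hz (fapQ σ) (2*n - fapQ σ)
    rw [Finset.mul_sum, map_sum, Finset.sum_congr rfl hterms]
    rw [comb n, Finset.mul_sum]
    apply Finset.sum_congr rfl
    intro σ hσ
    have hle := fapQ_le hσ
    rw [show 2*n - fapQ σ + 1 = 2*n + 1 - fapQ σ by omega,
      show 2*n - fapQ σ + 2 = 2*n + 2 - fapQ σ by omega]
    simp only [nsmul_eq_mul]
    ring

end Chunk10

theorem statement_5
    (D : Derivation ℚ (MvPolynomial (Fin 3) ℚ) (MvPolynomial (Fin 3) ℚ))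
    (hx : D (X 0) = X 0 * X 1 * X 2)
    (hy : D (X 1) = X 1 * X 2 ^ 2)
    (hz : D (X 2) = X 1 ^ 2 * X 2) (n : ℕ) (hn : 1 ≤ n) :
    (D.toLinearMap ^ n) (X 0) =
      X 0 * ∑ σ ∈ StirlingSet n, X 1 ^ fapQ σ * X 2 ^ (2 * n - fapQ σ) := by
  exact main_all D hx hy hz n
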